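/- For any real m×n matrix A of rank r and any integer k with 1 ≤ k < r, the rank-k truncated SVD A_k satisfies ‖A − A_k‖_F = min{‖A − B‖_F : rank(B) ≤ k} = √(σ_{k+1}² + ⋯ + σ_r²). -/

import Mathlib

open Matrix BigOperators

noncomputable def singularValue {m n : ℕ} (A : Matrix (Fin m) (Fin n) ℝ) : Fin n → ℝ :=
  fun j =>
    Real.sqrt ((show (Aᵀ * A).IsHermitian by
        simpa only [Matrix.conjTranspose_eq_transpose_of_trivial] using
          Matrix.isHermitian_conjTranspose_mul_self A).eigenvalues
      (Tuple.sort (fun i => -(show (Aᵀ * A).IsHermitian by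
        simpa only [Matrix.conjTranspose_eq_transpose_of_trivial] using
          Matrix.isHermitian_conjTranspose_mul_self A).eigenvalues i) j))

noncomputable def spectralNorm' {m n : ℕ} (A : Matrix (Fin m) (Fin n) ℝ) : ℝ :=
  ‖LinearMap.toContinuousLinearMap (Matrix.toEuclideanLin A)‖

noncomputable def frobNorm {m n : ℕ} (A : Matrix (Fin m) (Fin n) ℝ) : ℝ :=
  Real.sqrt (∑ i, ∑ j, (A i j)^2)

noncomputable def pinv {a b : ℕ} (W : Matrix (Fin a) (Fin b) ℝ) : Matrix (Fin b) (Fin a) ℝ :=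
  if a ≤ b then Wᵀ * (W * Wᵀ)⁻¹ else (Wᵀ * W)⁻¹ * Wᵀ

lemma onb_sum_prod {d m : ℕ} {p : Fin d → Fin m → ℝ}
    (hp : ∀ i j : Fin d, (∑ t, p i t * p j t) = if i = j then 1 else 0)
    (a b : Fin d → ℝ) :
    ∑ s, (∑ j, a j * p j s) * (∑ j, b j * p j s) = ∑ j, a j * b j := by
  have h1 : ∀ s : Fin m, (∑ j, a j * p j s) * (∑ j, b j * p j s)
      = ∑ j, ∑ l, (a j * b l) * (p j s * p l s) := by
    intro s
    rw [Finset.sum_mul_sum]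
    exact Finset.sum_congr rfl fun j _ => Finset.sum_congr rfl fun l _ => by ring
  calc ∑ s, (∑ j, a j * p j s) * (∑ j, b j * p j s)
      = ∑ s, ∑ j, ∑ l, (a j * b l) * (p j s * p l s) := Finset.sum_congr rfl fun s _ => h1 s
    _ = ∑ j, ∑ s, ∑ l, (a j * b l) * (p j s * p l s) := Finset.sum_comm
    _ = ∑ j, ∑ l, ∑ s, (a j * b l) * (p j s * p l s) :=
        Finset.sum_congr rfl fun j _ => Finset.sum_comm
    _ = ∑ j, ∑ l, (a j * b l) * ∑ s, p j s * p l s := by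
        refine Finset.sum_congr rfl fun j _ => Finset.sum_congr rfl fun l _ => ?_
        rw [Finset.mul_sum]
    _ = ∑ j, ∑ l, (a j * b l) * (if j = l then 1 else 0) := by
        refine Finset.sum_congr rfl fun j _ => Finset.sum_congr rfl fun l _ => by rw [hp]
    _ = ∑ j, a j * b j := by
        refine Finset.sum_congr rfl fun j _ => ?_
        simp

lemma frob_sq_eq {m n r : ℕ} {v : Fin r → Fin n → ℝ}
    (hv : ∀ i j : Fin r, (∑ t, v i t * v j t) = if i = j then 1 else 0)
    (c : Fin r → ℝ) (w : Fin r → Fin m → ℝ) :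
    (∑ t, ∑ s, ((∑ i, c i • Matrix.vecMulVec (w i) (v i)) t s)^2)
      = ∑ i, (c i)^2 * (∑ t, (w i t)^2) := by
  have h1 : ∀ t s, ((∑ i, c i • Matrix.vecMulVec (w i) (v i)) t s)
      = ∑ i, (c i * w i t) * v i s := by
    intro t s
    simp [Matrix.sum_apply, Matrix.vecMulVec_apply, mul_assoc]
  calc (∑ t, ∑ s, ((∑ i, c i • Matrix.vecMulVec (w i) (v i)) t s)^2)
      = ∑ t, ∑ s, (∑ i, (c i * w i t) * v i s) * (∑ i, (c i * w i t) * v i s) := by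
        refine Finset.sum_congr rfl fun t _ => Finset.sum_congr rfl fun s _ => ?_
        rw [h1, sq]
    _ = ∑ t, ∑ i, (c i * w i t) * (c i * w i t) := by
        refine Finset.sum_congr rfl fun t _ => onb_sum_prod hv _ _
    _ = ∑ i, ∑ t, (c i)^2 * (w i t)^2 := by
        rw [Finset.sum_comm]
        refine Finset.sum_congr rfl fun i _ => Finset.sum_congr rfl fun t _ => by ring
    _ = ∑ i, (c i)^2 * (∑ t, (w i t)^2) := by
        refine Finset.sum_congr rfl fun i _ => ?_
        rw [Finset.mul_sum]

lemma bessel_sums {d m : ℕ} {p : Fin d → Fin m → ℝ}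
    (hp : ∀ i j : Fin d, (∑ t, p i t * p j t) = if i = j then 1 else 0)
    (x : Fin m → ℝ) : ∑ j, (∑ t, p j t * x t)^2 ≤ ∑ t, (x t)^2 := by
  set e := (WithLp.equiv 2 (Fin m → ℝ)).symm with he
  have hinner : ∀ a b : Fin m → ℝ, (inner ℝ (e a) (e b) : ℝ) = ∑ t, a t * b t := by
    intro a b
    simp [he, PiLp.inner_apply, RCLike.inner_apply]
    exact Finset.sum_congr rfl fun _ _ => mul_comm _ _
  have hon : Orthonormal ℝ (fun j => e (p j)) := by
    rw [orthonormal_iff_ite]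
    intro i j
    rw [hinner]
    exact hp i j
  have hb := hon.sum_inner_products_le (s := Finset.univ) (e x)
  calc ∑ j, (∑ t, p j t * x t)^2 = ∑ j, ‖(inner ℝ (e (p j)) (e x) : ℝ)‖^2 := by
        refine Finset.sum_congr rfl fun j _ => ?_
        rw [hinner, Real.norm_eq_abs, sq_abs]
    _ ≤ ‖e x‖^2 := hb
    _ = ∑ t, (x t)^2 := by
        rw [← real_inner_self_eq_norm_sq, hinner]
        exact Finset.sum_congr rfl fun t _ => (sq (x t)).symm ▸ rfl

lemma frob_trace {m n : ℕ} (M : Matrix (Fin m) (Fin n) ℝ) :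
    ∑ i, ∑ j, (M i j)^2 = Matrix.trace (Mᵀ * M) := by
  rw [Matrix.trace]
  simp only [Matrix.diag_apply, Matrix.mul_apply, Matrix.transpose_apply]
  rw [Finset.sum_comm]
  exact Finset.sum_congr rfl fun i _ => Finset.sum_congr rfl fun j _ => sq (M j i)

lemma frob_pythagoras {m n : ℕ} (P : Matrix (Fin m) (Fin m) ℝ) (M : Matrix (Fin m) (Fin n) ℝ)
    (hPt : Pᵀ = P) (hPP : P * P = P) :
    ∑ i, ∑ j, (M i j)^2
      = (∑ i, ∑ j, ((P * M) i j)^2) + ∑ i, ∑ j, ((M - P * M) i j)^2 := by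
  rw [frob_trace, frob_trace, frob_trace]
  have h1 : (P * M)ᵀ * (P * M) = Mᵀ * (P * M) := by
    rw [Matrix.transpose_mul, hPt, Matrix.mul_assoc, ← Matrix.mul_assoc P P M, hPP]
  have h2 : (M - P * M)ᵀ * (M - P * M) = Mᵀ * M - Mᵀ * (P * M) := by
    rw [Matrix.transpose_sub, Matrix.sub_mul, Matrix.mul_sub, Matrix.mul_sub, h1]
    have h3 : (P * M)ᵀ * M = Mᵀ * (P * M) := by
      rw [Matrix.transpose_mul, hPt, Matrix.mul_assoc]
    rw [h3]
    abel
  rw [h1, h2, Matrix.trace_sub]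
  ring

lemma card_filter_lt {r k : ℕ} (hkr : k < r) :
    (Finset.univ.filter fun i : Fin r => (i : ℕ) < k).card = k := by
  have hset : Finset.univ.filter (fun i : Fin r => (i : ℕ) < k)
      = Finset.map (Fin.castLEEmb hkr.le) Finset.univ := by
    ext a
    simp only [Finset.mem_filter, Finset.mem_univ, true_and, Finset.mem_map,
      Fin.castLEEmb_apply]
    constructor
    · intro h
      exact ⟨⟨(a : ℕ), h⟩, by ext; simp⟩
    · rintro ⟨b, rfl⟩
      simpa using b.isLt
  rw [hset, Finset.card_map, Finset.card_univ, Fintype.card_fin]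

lemma exists_onb_cols {m n k : ℕ} (B : Matrix (Fin m) (Fin n) ℝ) (hB : B.rank ≤ k) :
    ∃ (d : ℕ) (p : Fin d → Fin m → ℝ), d ≤ k ∧
      (∀ i j : Fin d, (∑ t, p i t * p j t) = if i = j then 1 else 0) ∧
      (∀ (j : Fin n) (i : Fin m), B i j = ∑ l, (∑ s, p l s * B s j) * p l i) := by
  classical
  set e : EuclideanSpace ℝ (Fin m) ≃ₗ[ℝ] (Fin m → ℝ) :=
    WithLp.linearEquiv 2 ℝ (Fin m → ℝ) with he
  set S : Submodule ℝ (Fin m → ℝ) := Submodule.span ℝ (Set.range Bᵀ) with hS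
  set S' : Submodule ℝ (EuclideanSpace ℝ (Fin m)) := S.map e.symm.toLinearMap with hS'
  have hfin : Module.finrank ℝ S' = B.rank := by
    rw [hS', LinearEquiv.finrank_map_eq, hS, Matrix.rank_eq_finrank_span_cols]
    rfl
  set d := Module.finrank ℝ S' with hd
  set b := stdOrthonormalBasis ℝ S' with hb
  set p : Fin d → Fin m → ℝ := fun j => e ((b j : EuclideanSpace ℝ (Fin m))) with hpdef
  have hinner : ∀ x y : EuclideanSpace ℝ (Fin m),
      (inner ℝ x y : ℝ) = ∑ t, e x t * e y t := by
    intro x y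
    simp [he, PiLp.inner_apply, RCLike.inner_apply]
    exact Finset.sum_congr rfl fun _ _ => mul_comm _ _
  refine ⟨d, p, hfin.trans_le hB, ?_, ?_⟩
  · intro i j
    have := (orthonormal_iff_ite.mp b.orthonormal) i j
    rw [Submodule.coe_inner, hinner] at this
    rw [← this]
  · intro j i
    have hmem : Bᵀ j ∈ S := Submodule.subset_span ⟨j, rfl⟩
    have hx' : e.symm (Bᵀ j) ∈ S' := Submodule.mem_map_of_mem hmem
    have hrepr := b.sum_repr' ⟨e.symm (Bᵀ j), hx'⟩
    have hco : (∑ l, (inner ℝ (b l) (⟨e.symm (Bᵀ j), hx'⟩ : S') : ℝ) • ((b l : EuclideanSpace ℝ (Fin m))))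
        = e.symm (Bᵀ j) := by
      have h0 := congrArg (fun z : S' => (z : EuclideanSpace ℝ (Fin m))) hrepr
      simpa using h0
    have hthis : ∀ l, (inner ℝ (b l) (⟨e.symm (Bᵀ j), hx'⟩ : S') : ℝ) = ∑ s, p l s * B s j := by
      intro l
      rw [Submodule.coe_inner, hinner]
      refine Finset.sum_congr rfl fun s _ => ?_
      simp [hpdef]
    have happ := congrArg (fun z => e z i) hco
    simp only [map_sum, _root_.map_smul, Finset.sum_apply, Pi.smul_apply, smul_eq_mul,
      LinearEquiv.apply_symm_apply, Matrix.transpose_apply] at happ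
    rw [← happ]
    exact Finset.sum_congr rfl fun l _ => by rw [hthis l]


/-- Eckart–Young: the rank-k truncated SVD is the best rank-k approximation in
the Frobenius norm, with error √(σ_{k+1}² + ⋯ + σ_r²). -/
theorem truncated_svd_frobenius_opt {m n r : ℕ} (A : Matrix (Fin m) (Fin n) ℝ)
    (u : Fin r → Fin m → ℝ) (v : Fin r → Fin n → ℝ) (σ : Fin r → ℝ)
    (hA : A.rank = r)
    (hu : ∀ i j : Fin r, (∑ t, u i t * u j t) = if i = j then 1 else 0)
    (hv : ∀ i j : Fin r, (∑ t, v i t * v j t) = if i = j then 1 else 0)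
    (hσpos : ∀ i, 0 < σ i) (hσmono : ∀ i j : Fin r, i ≤ j → σ j ≤ σ i)
    (hsvd : A = ∑ i, σ i • Matrix.vecMulVec (u i) (v i))
    (k : ℕ) (hk1 : 1 ≤ k) (hkr : k < r) :
    frobNorm (A - ∑ i : Fin r, if (i : ℕ) < k then σ i • Matrix.vecMulVec (u i) (v i) else 0)
      = Real.sqrt (∑ i : Fin r, if k ≤ (i : ℕ) then (σ i)^2 else 0) ∧
    ∀ B : Matrix (Fin m) (Fin n) ℝ, B.rank ≤ k →
      Real.sqrt (∑ i : Fin r, if k ≤ (i : ℕ) then (σ i)^2 else 0) ≤ frobNorm (A - B) := by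
  classical
  have hu2 : ∀ i : Fin r, (∑ t, (u i t)^2) = 1 := by
    intro i; have := hu i i; simpa [sq] using this
  have hdiff : A - (∑ i : Fin r, if (i : ℕ) < k then σ i • Matrix.vecMulVec (u i) (v i) else 0)
      = ∑ i : Fin r, (if k ≤ (i : ℕ) then σ i else 0) • Matrix.vecMulVec (u i) (v i) := by
    rw [hsvd, ← Finset.sum_sub_distrib]
    refine Finset.sum_congr rfl fun i _ => ?_
    by_cases h : (i : ℕ) < k
    · simp [h, not_le.mpr h]
    · simp [h, not_lt.mp h]
  have e1 : (∑ t, ∑ s, ((A - ∑ i : Fin r, if (i : ℕ) < k then σ i • Matrix.vecMulVec (u i) (v i) else 0) t s)^2)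
      = ∑ i : Fin r, if k ≤ (i:ℕ) then (σ i)^2 else 0 := by
    rw [hdiff, frob_sq_eq hv]
    refine Finset.sum_congr rfl fun i _ => ?_
    rw [hu2 i, mul_one]
    by_cases h : k ≤ (i:ℕ) <;> simp [h]
  constructor
  · simp only [frobNorm]
    rw [e1]
  · intro B hBk
    obtain ⟨d, p, hdk, hp, hcol⟩ := exists_onb_cols B hBk
    set P : Matrix (Fin m) (Fin m) ℝ := ∑ j, Matrix.vecMulVec (p j) (p j) with hPdef
    have hPapp : ∀ i l, P i l = ∑ j, p j i * p j l := by
      intro i l; simp [hPdef, Matrix.sum_apply, Matrix.vecMulVec_apply]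
    have hPvec : ∀ (x : Fin m → ℝ) (t : Fin m),
        (∑ l, P t l * x l) = ∑ jj, (∑ s, p jj s * x s) * p jj t := by
      intro x t
      calc ∑ l, P t l * x l = ∑ l, ∑ jj, p jj t * (p jj l * x l) := by
            refine Finset.sum_congr rfl fun l _ => ?_
            rw [hPapp, Finset.sum_mul]
            exact Finset.sum_congr rfl fun jj _ => by ring
        _ = ∑ jj, ∑ l, p jj t * (p jj l * x l) := Finset.sum_comm
        _ = ∑ jj, (∑ s, p jj s * x s) * p jj t := by
            refine Finset.sum_congr rfl fun jj _ => ?_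
            rw [← Finset.mul_sum]
            ring
    have hPt : Pᵀ = P := by
      ext i l
      rw [Matrix.transpose_apply, hPapp, hPapp]
      exact Finset.sum_congr rfl fun j _ => mul_comm _ _
    have hPP : P * P = P := by
      ext i l
      rw [Matrix.mul_apply]
      calc ∑ s, P i s * P s l = ∑ s, (∑ j, p j i * p j s) * (∑ j, p j l * p j s) := by
            refine Finset.sum_congr rfl fun s _ => ?_
            rw [hPapp, hPapp]
            congr 1
            exact Finset.sum_congr rfl fun j _ => mul_comm _ _
        _ = ∑ j, p j i * p j l := onb_sum_prod hp _ _
        _ = P i l := (hPapp i l).symm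
    have hPB : P * B = B := by
      ext i j
      rw [Matrix.mul_apply, hPvec (fun l => B l j) i]
      exact (hcol j i).symm
    have hPA : P * A = ∑ i, σ i • Matrix.vecMulVec
        (fun t => ∑ jj, (∑ s, p jj s * u i s) * p jj t) (v i) := by
      ext t s
      rw [Matrix.mul_apply]
      have hAe : ∀ l, A l s = ∑ i, σ i * (u i l * v i s) := by
        intro l; rw [hsvd]; simp [Matrix.sum_apply, Matrix.vecMulVec_apply]
      calc ∑ l, P t l * A l s = ∑ l, ∑ i, (σ i * v i s) * (P t l * u i l) := by
            refine Finset.sum_congr rfl fun l _ => ?_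
            rw [hAe, Finset.mul_sum]
            exact Finset.sum_congr rfl fun i _ => by ring
        _ = ∑ i, ∑ l, (σ i * v i s) * (P t l * u i l) := Finset.sum_comm
        _ = ∑ i, (σ i * v i s) * (∑ l, P t l * u i l) := by
            refine Finset.sum_congr rfl fun i _ => (Finset.mul_sum _ _ _).symm
        _ = (∑ i, σ i • Matrix.vecMulVec
              (fun t => ∑ jj, (∑ s, p jj s * u i s) * p jj t) (v i)) t s := by
            simp only [Matrix.sum_apply, Matrix.smul_apply, Matrix.vecMulVec_apply, smul_eq_mul]
            refine Finset.sum_congr rfl fun i _ => ?_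
            rw [hPvec (u i) t]
            ring
    have hFPA : (∑ t, ∑ s, ((P * A) t s)^2)
        = ∑ i, (σ i)^2 * (∑ jj, (∑ s, p jj s * u i s)^2) := by
      rw [hPA, frob_sq_eq hv]
      refine Finset.sum_congr rfl fun i _ => ?_
      congr 1
      calc ∑ t, (∑ jj, (∑ s, p jj s * u i s) * p jj t)^2
          = ∑ t, (∑ jj, (∑ s, p jj s * u i s) * p jj t) * (∑ jj, (∑ s, p jj s * u i s) * p jj t) :=
            Finset.sum_congr rfl fun t _ => sq _
        _ = ∑ jj, (∑ s, p jj s * u i s) * (∑ s, p jj s * u i s) := onb_sum_prod hp _ _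
        _ = ∑ jj, (∑ s, p jj s * u i s)^2 := Finset.sum_congr rfl fun jj _ => (sq _).symm
    have hg1 : ∀ i : Fin r, (∑ jj, (∑ s, p jj s * u i s)^2) ≤ 1 := by
      intro i
      have := bessel_sums hp (u i)
      rwa [hu2 i] at this
    have hg0 : ∀ i : Fin r, 0 ≤ ∑ jj, (∑ s, p jj s * u i s)^2 :=
      fun i => Finset.sum_nonneg fun jj _ => sq_nonneg _
    have hp2 : ∀ jj : Fin d, (∑ s, (p jj s)^2) = 1 := by
      intro jj; have := hp jj jj; simpa [sq] using this
    have hgsum : (∑ i, ∑ jj, (∑ s, p jj s * u i s)^2) ≤ (k : ℝ) := by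
      calc (∑ i : Fin r, ∑ jj, (∑ s, p jj s * u i s)^2)
          = ∑ jj, ∑ i, (∑ s, u i s * p jj s)^2 := by
            rw [Finset.sum_comm]
            refine Finset.sum_congr rfl fun jj _ => Finset.sum_congr rfl fun i _ => ?_
            congr 1
            exact Finset.sum_congr rfl fun s _ => mul_comm _ _
        _ ≤ ∑ jj : Fin d, ∑ s, (p jj s)^2 := Finset.sum_le_sum fun jj _ => bessel_sums hu (p jj)
        _ = ∑ jj : Fin d, (1:ℝ) := Finset.sum_congr rfl fun jj _ => hp2 jj
        _ = (d : ℝ) := by simp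
        _ ≤ (k : ℝ) := Nat.cast_le.mpr hdk
    have hsplitg := Finset.sum_filter_add_sum_filter_not Finset.univ
      (fun i : Fin r => (i:ℕ) < k) (fun i => ∑ jj, (∑ s, p jj s * u i s)^2)
    have hsplit := Finset.sum_filter_add_sum_filter_not Finset.univ
      (fun i : Fin r => (i:ℕ) < k) (fun i => (σ i)^2 * ∑ jj, (∑ s, p jj s * u i s)^2)
    have hsplitσ := Finset.sum_filter_add_sum_filter_not Finset.univ
      (fun i : Fin r => (i:ℕ) < k) (fun i => (σ i)^2)
    have hkey : (∑ i, (σ i)^2 * (∑ jj, (∑ s, p jj s * u i s)^2))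
        ≤ ∑ i ∈ Finset.univ.filter (fun i : Fin r => (i:ℕ) < k), (σ i)^2 := by
      have hS2g : (∑ i ∈ Finset.univ.filter (fun i : Fin r => ¬ (i:ℕ) < k),
            (σ i)^2 * (∑ jj, (∑ s, p jj s * u i s)^2))
          ≤ (σ ⟨k, hkr⟩)^2 * ∑ i ∈ Finset.univ.filter (fun i : Fin r => ¬ (i:ℕ) < k),
            (∑ jj, (∑ s, p jj s * u i s)^2) := by
        rw [Finset.mul_sum]
        refine Finset.sum_le_sum fun i hi => ?_
        have hik : k ≤ (i:ℕ) := not_lt.mp (Finset.mem_filter.mp hi).2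
        have hKi : (⟨k, hkr⟩ : Fin r) ≤ i := Fin.le_def.mpr hik
        exact mul_le_mul_of_nonneg_right
          (pow_le_pow_left₀ (hσpos i).le (hσmono _ i hKi) 2) (hg0 i)
      have hS2gsum : (∑ i ∈ Finset.univ.filter (fun i : Fin r => ¬ (i:ℕ) < k),
            (∑ jj, (∑ s, p jj s * u i s)^2))
          ≤ (k:ℝ) - ∑ i ∈ Finset.univ.filter (fun i : Fin r => (i:ℕ) < k),
            (∑ jj, (∑ s, p jj s * u i s)^2) := by
        linarith [hsplitg, hgsum]
      have hterm : ∀ i ∈ Finset.univ.filter (fun i : Fin r => (i:ℕ) < k),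
          (σ i)^2 * (∑ jj, (∑ s, p jj s * u i s)^2)
            + (σ ⟨k, hkr⟩)^2 * (1 - (∑ jj, (∑ s, p jj s * u i s)^2)) ≤ (σ i)^2 := by
        intro i hi
        have hik : (i:ℕ) < k := (Finset.mem_filter.mp hi).2
        have hiK : i ≤ (⟨k, hkr⟩ : Fin r) := Fin.le_def.mpr (le_of_lt hik)
        have h1 : (σ ⟨k, hkr⟩)^2 ≤ (σ i)^2 :=
          pow_le_pow_left₀ (hσpos _).le (hσmono i _ hiK) 2
        nlinarith [hg0 i, hg1 i]
      have hsum1 : (∑ _i ∈ Finset.univ.filter (fun i : Fin r => (i:ℕ) < k), (1:ℝ)) = (k:ℝ) := by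
        rw [Finset.sum_const, card_filter_lt hkr, nsmul_eq_mul, mul_one]
      have hKnn : (0:ℝ) ≤ (σ ⟨k, hkr⟩)^2 := sq_nonneg _
      calc (∑ i, (σ i)^2 * (∑ jj, (∑ s, p jj s * u i s)^2))
          = (∑ i ∈ Finset.univ.filter (fun i : Fin r => (i:ℕ) < k),
              (σ i)^2 * (∑ jj, (∑ s, p jj s * u i s)^2))
            + ∑ i ∈ Finset.univ.filter (fun i : Fin r => ¬ (i:ℕ) < k),
              (σ i)^2 * (∑ jj, (∑ s, p jj s * u i s)^2) := hsplit.symm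
        _ ≤ (∑ i ∈ Finset.univ.filter (fun i : Fin r => (i:ℕ) < k),
              (σ i)^2 * (∑ jj, (∑ s, p jj s * u i s)^2))
            + (σ ⟨k, hkr⟩)^2 * ((k:ℝ) - ∑ i ∈ Finset.univ.filter (fun i : Fin r => (i:ℕ) < k),
              (∑ jj, (∑ s, p jj s * u i s)^2)) := by
            have := mul_le_mul_of_nonneg_left hS2gsum hKnn
            linarith [hS2g]
        _ = ∑ i ∈ Finset.univ.filter (fun i : Fin r => (i:ℕ) < k),
              ((σ i)^2 * (∑ jj, (∑ s, p jj s * u i s)^2)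
                + (σ ⟨k, hkr⟩)^2 * (1 - (∑ jj, (∑ s, p jj s * u i s)^2))) := by
            rw [Finset.sum_add_distrib, ← Finset.mul_sum, Finset.sum_sub_distrib, hsum1]
        _ ≤ ∑ i ∈ Finset.univ.filter (fun i : Fin r => (i:ℕ) < k), (σ i)^2 :=
            Finset.sum_le_sum hterm
    have hFA : (∑ t, ∑ s, (A t s)^2) = ∑ i, (σ i)^2 := by
      conv_lhs => rw [hsvd]
      rw [frob_sq_eq hv]
      exact Finset.sum_congr rfl fun i _ => by rw [hu2 i, mul_one]
    have hpy1 := frob_pythagoras P A hPt hPP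
    have hpy2 := frob_pythagoras P (A - B) hPt hPP
    have hsimp : A - B - P * (A - B) = A - P * A := by
      rw [Matrix.mul_sub, hPB]
      abel
    rw [hsimp] at hpy2
    have hnn1 : (0:ℝ) ≤ ∑ t, ∑ s, ((P * (A - B)) t s)^2 :=
      Finset.sum_nonneg fun _ _ => Finset.sum_nonneg fun _ _ => sq_nonneg _
    have hT : (∑ i : Fin r, if k ≤ (i:ℕ) then (σ i)^2 else 0)
        = ∑ i ∈ Finset.univ.filter (fun i : Fin r => ¬ (i:ℕ) < k), (σ i)^2 := by
      rw [Finset.sum_filter]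
      exact Finset.sum_congr rfl fun i _ => by simp [not_lt]
    have hfin2 : (∑ i : Fin r, if k ≤ (i:ℕ) then (σ i)^2 else 0)
        ≤ ∑ t, ∑ s, ((A - B) t s)^2 := by
      linarith [hpy1, hpy2, hnn1, hFA, hFPA, hkey, hsplitσ, hT]
    simp only [frobNorm]
    exact Real.sqrt_le_sqrt hfin2
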